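/- Let D = 2k be even, let M ∈ ℝ^{D×D} be the block-swap matrix [[0, I_k],[I_k, 0]], let L ≥ 1, let X₁, X₂ ∈ ℝ^{L×D}, and let α₁, α₂, α₃ ∈ ℝ. Define W ∈ ℝ^{2D×2D} in D×D blocks by W = [[α₁·I_D, 0],[0, α₂·I_D + α₃·M]]. Then for every orthogonal matrix E ∈ ℝ^{D×D} and every block-orthogonal matrix F ∈ ℝ^{D×D} (with respect to the split D = k + k), the matrix of first-layer attention scores is invariant under the data rotation: [X₁·E | X₂·F]·W·[X₁·E | X₂·F]ᵀ = [X₁ | X₂]·W·[X₁ | X₂]ᵀ, where [A | B] denotes horizontal concatenation of matrices. -/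

import Mathlib

open Matrix

/-- A matrix `E` is orthogonal if `E·Eᵀ = Eᵀ·E = 1`. -/
def IsOrthoMat {m : Type*} [Fintype m] [DecidableEq m] (E : Matrix m m ℝ) : Prop :=
  E * Eᵀ = 1 ∧ Eᵀ * E = 1

/-- A `2k×2k` matrix `F` is block-orthogonal if, for some orthogonal `k×k` matrix `E₀`,
either `F = [[E₀,0],[0,E₀]]` or `F = [[0,E₀],[E₀,0]]` in `k×k` blocks. -/
def IsBlockOrthoMat {k : ℕ} (F : Matrix (Fin k ⊕ Fin k) (Fin k ⊕ Fin k) ℝ) : Prop :=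
  ∃ E₀ : Matrix (Fin k) (Fin k) ℝ, IsOrthoMat E₀ ∧
    (F = Matrix.fromBlocks E₀ 0 0 E₀ ∨ F = Matrix.fromBlocks 0 E₀ E₀ 0)

/-- The block-swap matrix `M = [[0, I_k],[I_k, 0]]` on `ℝ^D` with `D = 2k`. -/
def blockSwap (k : ℕ) : Matrix (Fin k ⊕ Fin k) (Fin k ⊕ Fin k) ℝ :=
  Matrix.fromBlocks 0 1 1 0

lemma key {L D₁ D₂ : Type*} [Fintype D₁] [Fintype D₂]
    (A : Matrix L D₁ ℝ) (B : Matrix L D₂ ℝ) (W₁ : Matrix D₁ D₁ ℝ) (W₂ : Matrix D₂ D₂ ℝ) :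
    Matrix.fromCols A B * Matrix.fromBlocks W₁ 0 0 W₂ * (Matrix.fromCols A B)ᵀ
      = A * W₁ * Aᵀ + B * W₂ * Bᵀ := by
  rw [Matrix.fromCols_mul_fromBlocks, Matrix.transpose_fromCols,
    Matrix.fromCols_mul_fromRows]
  simp [Matrix.mul_assoc]

theorem stmt4 (k : ℕ) (hk : 1 ≤ k) (L : ℕ) (hL : 1 ≤ L)
    (X₁ X₂ : Matrix (Fin L) (Fin k ⊕ Fin k) ℝ) (α₁ α₂ α₃ : ℝ)
    (E : Matrix (Fin k ⊕ Fin k) (Fin k ⊕ Fin k) ℝ) (hE : IsOrthoMat E)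
    (F : Matrix (Fin k ⊕ Fin k) (Fin k ⊕ Fin k) ℝ) (hF : IsBlockOrthoMat F) :
    Matrix.fromCols (X₁ * E) (X₂ * F) *
        Matrix.fromBlocks (α₁ • (1 : Matrix (Fin k ⊕ Fin k) (Fin k ⊕ Fin k) ℝ)) 0 0
          (α₂ • (1 : Matrix (Fin k ⊕ Fin k) (Fin k ⊕ Fin k) ℝ) + α₃ • blockSwap k) *
        (Matrix.fromCols (X₁ * E) (X₂ * F))ᵀ =
      Matrix.fromCols X₁ X₂ *
        Matrix.fromBlocks (α₁ • (1 : Matrix (Fin k ⊕ Fin k) (Fin k ⊕ Fin k) ℝ)) 0 0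
          (α₂ • (1 : Matrix (Fin k ⊕ Fin k) (Fin k ⊕ Fin k) ℝ) + α₃ • blockSwap k) *
        (Matrix.fromCols X₁ X₂)ᵀ := by
  obtain ⟨hE1, hE2⟩ := hE
  obtain ⟨E₀, ⟨hF1, hF2⟩, hcases⟩ := hF
  rw [key, key]
  have hFF : F * Fᵀ = 1 := by
    rcases hcases with h | h <;> subst h <;>
      simp [Matrix.fromBlocks_transpose, Matrix.fromBlocks_multiply, hF1,
        Matrix.fromBlocks_one]
  have hFM : F * blockSwap k * Fᵀ = blockSwap k := by
    rcases hcases with h | h <;> subst h <;>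
      simp [blockSwap, Matrix.fromBlocks_transpose, Matrix.fromBlocks_multiply, hF1]
  have h1 : X₁ * E * (α₁ • (1 : Matrix (Fin k ⊕ Fin k) (Fin k ⊕ Fin k) ℝ)) * (X₁ * E)ᵀ = X₁ * (α₁ • (1 : Matrix (Fin k ⊕ Fin k) (Fin k ⊕ Fin k) ℝ)) * X₁ᵀ := by
    rw [Matrix.transpose_mul]
    simp only [Matrix.mul_smul, Matrix.smul_mul, Matrix.mul_one]
    rw [Matrix.mul_assoc X₁ E, ← Matrix.mul_assoc E, hE1, Matrix.one_mul]
  have h2 : X₂ * F * (α₂ • 1 + α₃ • blockSwap k) * (X₂ * F)ᵀ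
      = X₂ * (α₂ • 1 + α₃ • blockSwap k) * X₂ᵀ := by
    rw [Matrix.transpose_mul]
    have : F * (α₂ • 1 + α₃ • blockSwap k) * Fᵀ = α₂ • 1 + α₃ • blockSwap k := by
      rw [Matrix.mul_add, Matrix.add_mul]
      simp only [Matrix.mul_smul, Matrix.smul_mul, Matrix.mul_one, hFF, hFM]
    calc X₂ * F * (α₂ • 1 + α₃ • blockSwap k) * (Fᵀ * X₂ᵀ)
        = X₂ * (F * (α₂ • 1 + α₃ • blockSwap k) * Fᵀ) * X₂ᵀ := by
          simp only [Matrix.mul_assoc]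
      _ = _ := by rw [this]
  rw [h1, h2]
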